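/- The Reissner–Nordström–de Sitter parameters (Λ, M, Q) with Λ > 0, M > 0 and Q ∈ ℝ are non-degenerate if and only if one of the following holds: (i) Q = 0 and 0 < 9ΛM² < 1; or (ii) Q ≠ 0, D := 9M² − 8Q² > 0, and max(0, 6(M − √D)/(3M − √D)³) < Λ < 6(M + √D)/(3M + √D)³. -/

import Mathlib

/-- The Reissner–Nordström–de Sitter metric coefficient
`μ(r) = 1 − 2M/r − Λr²/3 + Q²/r²`. -/
noncomputable def mu (Λ M Q r : ℝ) : ℝ := 1 - 2 * M / r - Λ * r ^ 2 / 3 + Q ^ 2 / r ^ 2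

/-- `ψ(r) = μ(r)/r²`. -/
noncomputable def psi (Λ M Q r : ℝ) : ℝ := mu Λ M Q r / r ^ 2

/-- Non-degeneracy of the RNdS parameters `(Λ, M, Q)`, witnessed by the horizon radii
`0 < rm < rp`: `rm`, `rp` are simple roots of `μ`, `μ` has no roots in `(rm, rp) ∪ (rp, ∞)`
(so they are the two largest positive roots), and `ψ = μ/r²` has exactly one critical point
`rP` in `(rm, rp)`, which is non-degenerate (`ψ″(rP) ≠ 0`). -/
def NondegAt (Λ M Q rm rp : ℝ) : Prop :=
  0 < rm ∧ rm < rp ∧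
  mu Λ M Q rm = 0 ∧ mu Λ M Q rp = 0 ∧
  deriv (mu Λ M Q) rm ≠ 0 ∧ deriv (mu Λ M Q) rp ≠ 0 ∧
  (∀ r : ℝ, (rm < r ∧ r < rp) ∨ rp < r → mu Λ M Q r ≠ 0) ∧
  ∃ rP ∈ Set.Ioo rm rp,
    deriv (psi Λ M Q) rP = 0 ∧
    deriv (deriv (psi Λ M Q)) rP ≠ 0 ∧
    ∀ r ∈ Set.Ioo rm rp, deriv (psi Λ M Q) r = 0 → r = rP

/-- The RNdS parameters `(Λ, M, Q)` are non-degenerate. -/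
def RNdSNondeg (Λ M Q : ℝ) : Prop := ∃ rm rp : ℝ, NondegAt Λ M Q rm rp

namespace RNdSAux

noncomputable def g (M Q r : ℝ) : ℝ := 3*(r^2 - 2*M*r + Q^2)/r^4

lemma mu_eq_g {Λ M Q r : ℝ} (hr : r ≠ 0) : mu Λ M Q r = r^2 * (g M Q r - Λ)/3 := by
  unfold mu g; field_simp; ring

lemma mu_zero_iff {Λ M Q r : ℝ} (hr : r ≠ 0) : (mu Λ M Q r = 0 ↔ g M Q r = Λ) := by
  rw [mu_eq_g hr, div_eq_zero_iff, mul_eq_zero]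
  simp [pow_eq_zero_iff, hr, sub_eq_zero]

lemma nhds_ne {r : ℝ} (hr : r ≠ 0) : {x : ℝ | x ≠ 0} ∈ nhds r :=
  isOpen_ne.mem_nhds hr

lemma hasDerivAt_psi {Λ M Q r : ℝ} (hr : r ≠ 0) :
    HasDerivAt (psi Λ M Q) (-2*(r^2 - 3*M*r + 2*Q^2)/r^5) r := by
  have hn : HasDerivAt (fun x : ℝ => x^2 - 2*M*x + Q^2) (2*r - 2*M) r := by
    simpa using (((hasDerivAt_pow 2 r).sub ((hasDerivAt_id r).const_mul (2*M))).add_const (Q^2))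
  have hd : HasDerivAt (fun x : ℝ => x^4) (4*r^3) r := by simpa using hasDerivAt_pow 4 r
  have h1 : HasDerivAt (fun x : ℝ => (x^2 - 2*M*x + Q^2)/x^4 - Λ/3)
      (((2*r - 2*M)*r^4 - (r^2 - 2*M*r + Q^2)*(4*r^3))/(r^4)^2) r := by
    simpa using (hn.div hd (pow_ne_zero 4 hr)).sub_const (Λ/3)
  have heq : psi Λ M Q =ᶠ[nhds r] fun x : ℝ => (x^2 - 2*M*x + Q^2)/x^4 - Λ/3 := by
    filter_upwards [nhds_ne hr] with x hx
    unfold psi mu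
    field_simp
    ring
  have h2 := h1.congr_of_eventuallyEq heq
  refine h2.congr_deriv ?_
  field_simp
  ring

lemma deriv_psi {Λ M Q r : ℝ} (hr : r ≠ 0) :
    deriv (psi Λ M Q) r = -2*(r^2 - 3*M*r + 2*Q^2)/r^5 := (hasDerivAt_psi hr).deriv

lemma deriv2_psi {Λ M Q r : ℝ} (hr : r ≠ 0) :
    deriv (deriv (psi Λ M Q)) r = (6*r^2 - 24*M*r + 20*Q^2)/r^6 := by
  have heq : deriv (psi Λ M Q) =ᶠ[nhds r] fun x : ℝ => -2*(x^2 - 3*M*x + 2*Q^2)/x^5 := by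
    filter_upwards [nhds_ne hr] with x hx
    exact deriv_psi hx
  rw [heq.deriv_eq]
  have hn : HasDerivAt (fun x : ℝ => -2*(x^2 - 3*M*x + 2*Q^2)) (-2*(2*r - 3*M)) r := by
    have : HasDerivAt (fun x : ℝ => x^2 - 3*M*x + 2*Q^2) (2*r - 3*M) r := by
      simpa using (((hasDerivAt_pow 2 r).sub ((hasDerivAt_id r).const_mul (3*M))).add_const (2*Q^2))
    simpa using this.const_mul (-2 : ℝ)
  have hd : HasDerivAt (fun x : ℝ => x^5) (5*r^4) r := by simpa using hasDerivAt_pow 5 r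
  have h1 := hn.div hd (pow_ne_zero 5 hr)
  rw [show deriv (fun x : ℝ => -2*(x^2 - 3*M*x + 2*Q^2)/x^5) r = _ from h1.deriv]
  field_simp
  ring

lemma hasDerivAt_g {M Q r : ℝ} (hr : r ≠ 0) :
    HasDerivAt (g M Q) (-6*(r^2 - 3*M*r + 2*Q^2)/r^5) r := by
  have hn : HasDerivAt (fun x : ℝ => 3*(x^2 - 2*M*x + Q^2)) (3*(2*r - 2*M)) r := by
    have : HasDerivAt (fun x : ℝ => x^2 - 2*M*x + Q^2) (2*r - 2*M) r := by
      simpa using (((hasDerivAt_pow 2 r).sub ((hasDerivAt_id r).const_mul (2*M))).add_const (Q^2))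
    exact this.const_mul 3
  have hd : HasDerivAt (fun x : ℝ => x^4) (4*r^3) r := by simpa using hasDerivAt_pow 4 r
  have h1 := hn.div hd (pow_ne_zero 4 hr)
  have h2 : g M Q = fun x : ℝ => (3*(x^2 - 2*M*x + Q^2))/x^4 := by
    funext x; unfold g; ring
  rw [h2]
  refine h1.congr_deriv ?_
  field_simp
  ring

lemma deriv_g {M Q r : ℝ} (hr : r ≠ 0) :
    deriv (g M Q) r = -6*(r^2 - 3*M*r + 2*Q^2)/r^5 := (hasDerivAt_g hr).deriv

lemma hasDerivAt_mu {Λ M Q r : ℝ} (hr : r ≠ 0) :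
    HasDerivAt (mu Λ M Q) ((2*M*r - 2*Q^2)/r^3 - 2*Λ*r/3) r := by
  have hn : HasDerivAt (fun x : ℝ => x^2 - 2*M*x + Q^2) (2*r - 2*M) r := by
    simpa using (((hasDerivAt_pow 2 r).sub ((hasDerivAt_id r).const_mul (2*M))).add_const (Q^2))
  have hd : HasDerivAt (fun x : ℝ => x^2) (2*r) r := by simpa using hasDerivAt_pow 2 r
  have h1 : HasDerivAt (fun x : ℝ => (x^2 - 2*M*x + Q^2)/x^2 - Λ*x^2/3)
      (((2*r - 2*M)*r^2 - (r^2 - 2*M*r + Q^2)*(2*r))/(r^2)^2 - Λ*(2*r)/3) r := by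
    exact (hn.div hd (pow_ne_zero 2 hr)).sub ((hd.const_mul Λ).div_const 3)
  have heq : mu Λ M Q =ᶠ[nhds r] fun x : ℝ => (x^2 - 2*M*x + Q^2)/x^2 - Λ*x^2/3 := by
    filter_upwards [nhds_ne hr] with x hx
    unfold mu
    field_simp
    ring
  have h2 := h1.congr_of_eventuallyEq heq
  refine h2.congr_deriv ?_
  field_simp
  ring

lemma deriv_mu_at_root {Λ M Q r : ℝ} (hr : 0 < r) (h : g M Q r = Λ) :
    deriv (mu Λ M Q) r = -2*(r^2 - 3*M*r + 2*Q^2)/r^3 := by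
  rw [(hasDerivAt_mu hr.ne').deriv, ← h]
  unfold g
  field_simp
  ring

lemma g_contOn {M Q : ℝ} {s : Set ℝ} (hs : ∀ x ∈ s, x ≠ 0) : ContinuousOn (g M Q) s :=
  fun x hx => ((hasDerivAt_g (hs x hx)).differentiableAt.continuousAt).continuousWithinAt

lemma g_mono {M Q a b : ℝ} (ha : 0 < a)
    (h : ∀ r, a < r → r < b → r^2 - 3*M*r + 2*Q^2 < 0) :
    StrictMonoOn (g M Q) (Set.Icc a b) := by
  apply strictMonoOn_of_deriv_pos (convex_Icc a b)
  · exact g_contOn (fun x hx => (lt_of_lt_of_le ha hx.1).ne')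
  · intro x hx
    rw [interior_Icc] at hx
    have hx0 : 0 < x := lt_trans ha hx.1
    rw [deriv_g hx0.ne']
    have := h x hx.1 hx.2
    have h5 : 0 < x^5 := by positivity
    rw [div_pos_iff]
    left
    constructor <;> nlinarith

lemma g_anti_Ici {M Q c : ℝ} (hc : 0 < c)
    (h : ∀ r, c < r → 0 < r^2 - 3*M*r + 2*Q^2) :
    StrictAntiOn (g M Q) (Set.Ici c) := by
  apply strictAntiOn_of_deriv_neg (convex_Ici c)
  · exact g_contOn (fun x hx => (lt_of_lt_of_le hc hx).ne')
  · intro x hx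
    rw [interior_Ici] at hx
    have hx0 : 0 < x := lt_trans hc hx
    rw [deriv_g hx0.ne']
    have := h x hx
    have h5 : 0 < x^5 := by positivity
    rw [div_neg_iff]
    right
    constructor <;> nlinarith

lemma exists_big (Λ M Q c : ℝ) (hΛ : 0 < Λ) (hM : 0 < M) :
    ∃ R, c < R ∧ g M Q R < Λ := by
  refine ⟨max (c+1) (1 + 3*(1+Q^2)/Λ), lt_of_lt_of_le (by linarith) (le_max_left _ _), ?_⟩
  set R := max (c+1) (1 + 3*(1+Q^2)/Λ) with hR
  have h1 : 1 + 3*(1+Q^2)/Λ ≤ R := le_max_right _ _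
  have hq : 0 < 3*(1+Q^2)/Λ := by positivity
  have hR1 : 1 ≤ R := by linarith
  have hR0 : 0 < R := by linarith
  have hΛR : 3*(1+Q^2) < Λ*R := by
    have : Λ * (3*(1+Q^2)/Λ) = 3*(1+Q^2) := by field_simp
    nlinarith
  unfold g
  rw [div_lt_iff₀ (by positivity)]
  have h2 : R^2*(R-1) ≥ 0 := mul_nonneg (sq_nonneg R) (by linarith)
  have h3 : Q^2*(R^3-1) ≥ 0 := by
    have : (1:ℝ) ≤ R^3 := one_le_pow₀ hR1
    nlinarith [sq_nonneg Q]
  have h4 := mul_lt_mul_of_pos_right hΛR (pow_pos hR0 3)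
  nlinarith [mul_pos hM hR0]

lemma g_r1 {M Q s : ℝ} (hs2 : s^2 = 9*M^2 - 8*Q^2) (h3 : s < 3*M) :
    g M Q ((3*M - s)/2) = 6*(M - s)/(3*M - s)^3 := by
  have h1 : (3*M - s) ≠ 0 := by linarith
  unfold g
  rw [show Q^2 = (9*M^2 - s^2)/8 from by linarith]
  field_simp
  ring

lemma g_r2 {M Q s : ℝ} (hs2 : s^2 = 9*M^2 - 8*Q^2) (h3 : 0 < 3*M + s) :
    g M Q ((3*M + s)/2) = 6*(M + s)/(3*M + s)^3 := by
  have h1 : (3*M + s) ≠ 0 := h3.ne'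
  unfold g
  rw [show Q^2 = (9*M^2 - s^2)/8 from by linarith]
  field_simp
  ring

lemma exists_nondeg {Λ M Q s a : ℝ} (hΛ : 0 < Λ) (hM : 0 < M) (hs0 : 0 < s)
    (hs2 : s^2 = 9*M^2 - 8*Q^2) (ha0 : 0 < a) (har1 : (3*M - s)/2 ≤ a)
    (har2 : a < (3*M + s)/2) (hga : g M Q a < Λ)
    (hΛ2 : Λ < g M Q ((3*M + s)/2)) : RNdSNondeg Λ M Q := by
  set r₂ := (3*M + s)/2 with hr₂def
  have hr₂0 : 0 < r₂ := lt_trans ha0 har2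
  have hQ2 : 2*Q^2 = (9*M^2 - s^2)/4 := by linarith
  have hfac : ∀ r : ℝ, r^2 - 3*M*r + 2*Q^2 = (r - (3*M - s)/2) * (r - r₂) := by
    intro r; rw [hr₂def]; linear_combination hQ2
  have hmono : StrictMonoOn (g M Q) (Set.Icc a r₂) := by
    refine g_mono ha0 (fun r h1 h2 => ?_)
    rw [hfac r]
    exact mul_neg_of_pos_of_neg (by linarith) (by linarith)
  have hanti : StrictAntiOn (g M Q) (Set.Ici r₂) := by
    refine g_anti_Ici hr₂0 (fun r h => ?_)
    rw [hfac r]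
    exact mul_pos (by nlinarith) (by linarith)
  obtain ⟨rm, hrmIoo, hgrm⟩ := intermediate_value_Ioo (le_of_lt har2)
    (g_contOn (fun x hx => (lt_of_lt_of_le ha0 hx.1).ne')) (Set.mem_Ioo.2 ⟨hga, hΛ2⟩)
  obtain ⟨R, hRgt, hgR⟩ := exists_big Λ M Q r₂ hΛ hM
  obtain ⟨rp, hrpIoo, hgrp⟩ := intermediate_value_Ioo' (le_of_lt hRgt)
    (g_contOn (fun x hx => (lt_of_lt_of_le hr₂0 hx.1).ne')) (Set.mem_Ioo.2 ⟨hgR, hΛ2⟩)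
  have hrma : a < rm := hrmIoo.1
  have hrm2 : rm < r₂ := hrmIoo.2
  have hrp2 : r₂ < rp := hrpIoo.1
  have hrm0 : 0 < rm := lt_trans ha0 hrma
  have hrmrp : rm < rp := lt_trans hrm2 hrp2
  have hrp0 : 0 < rp := lt_trans hrm0 hrmrp
  refine ⟨rm, rp, hrm0, hrmrp, (mu_zero_iff hrm0.ne').2 hgrm, (mu_zero_iff hrp0.ne').2 hgrp,
    ?_, ?_, ?_, r₂, ⟨hrm2, hrp2⟩, ?_, ?_, ?_⟩
  · rw [deriv_mu_at_root hrm0 hgrm, hfac rm]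
    apply ne_of_gt
    apply div_pos ?_ (by positivity)
    nlinarith [mul_neg_of_pos_of_neg (show 0 < rm - (3*M - s)/2 by linarith)
      (show rm - r₂ < 0 by linarith)]
  · rw [deriv_mu_at_root hrp0 hgrp, hfac rp]
    apply ne_of_lt
    apply div_neg_of_neg_of_pos ?_ (by positivity)
    nlinarith [mul_pos (show 0 < rp - (3*M - s)/2 by linarith) (show 0 < rp - r₂ by linarith)]
  · intro r hr
    rcases hr with ⟨h1, h2⟩ | h
    · have hr0 : 0 < r := lt_trans hrm0 h1
      rw [Ne, mu_zero_iff hr0.ne']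
      intro hgr
      rcases le_or_gt r r₂ with h | h
      · have := hmono ⟨hrma.le, hrm2.le⟩ ⟨(hrma.trans h1).le, h⟩ h1
        rw [hgrm, hgr] at this; exact lt_irrefl _ this
      · have := hanti (Set.mem_Ici.2 h.le) (Set.mem_Ici.2 hrp2.le) h2
        rw [hgrp, hgr] at this; exact lt_irrefl _ this
    · have hr0 : 0 < r := lt_trans hrp0 h
      rw [Ne, mu_zero_iff hr0.ne']
      intro hgr
      have := hanti (Set.mem_Ici.2 hrp2.le) (Set.mem_Ici.2 (hrp2.trans h).le) h
      rw [hgrp, hgr] at this; exact lt_irrefl _ this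
  · rw [deriv_psi hr₂0.ne', hfac r₂]
    simp
  · rw [deriv2_psi hr₂0.ne']
    apply ne_of_lt
    apply div_neg_of_neg_of_pos ?_ (by positivity)
    nlinarith [mul_pos hs0 (show (0:ℝ) < 3*M + s by nlinarith)]
  · intro r hrIoo hdr
    have hr0 : 0 < r := lt_trans hrm0 hrIoo.1
    rw [deriv_psi hr0.ne'] at hdr
    have hq : (r - (3*M - s)/2) * (r - r₂) = 0 := by
      rw [← hfac r]
      have h5 : (r:ℝ)^5 ≠ 0 := by positivity
      field_simp at hdr
      linarith
    rcases mul_eq_zero.1 hq with h | h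
    · exfalso
      have : r = (3*M - s)/2 := by linarith
      linarith [hrIoo.1]
    · linarith [sub_eq_zero.1 h]

lemma forward {Λ M Q : ℝ} (hΛ : 0 < Λ) (hM : 0 < M) (h : RNdSNondeg Λ M Q) :
    ∃ s : ℝ, 0 < s ∧ s^2 = 9*M^2 - 8*Q^2 ∧ Λ < g M Q ((3*M + s)/2) ∧
      (0 < (3*M - s)/2 → g M Q ((3*M - s)/2) < Λ) := by
  obtain ⟨rm, rp, hrm0, hrmrp, hmrm, hmrp, hdm, hdp, hnr, rP, hrPmem, hd1, hd2, huniq⟩ := h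
  have hrp0 : 0 < rp := lt_trans hrm0 hrmrp
  have hrP0 : 0 < rP := lt_trans hrm0 hrPmem.1
  have quadP : rP^2 - 3*M*rP + 2*Q^2 = 0 := by
    rw [deriv_psi hrP0.ne'] at hd1
    have h5 : (rP:ℝ)^5 ≠ 0 := by positivity
    field_simp at hd1
    linarith
  have hDsq : (2*rP - 3*M)^2 = 9*M^2 - 8*Q^2 := by linear_combination 4*quadP
  have hD : 0 < 9*M^2 - 8*Q^2 := by
    rcases lt_or_eq_of_le (by nlinarith [sq_nonneg (2*rP - 3*M)] :
        (0:ℝ) ≤ 9*M^2 - 8*Q^2) with hlt | heq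
    · exact hlt
    · exfalso
      have h23 : 2*rP - 3*M = 0 := by nlinarith [sq_nonneg (2*rP - 3*M)]
      apply hd2
      rw [deriv2_psi hrP0.ne']
      have hz : 6*rP^2 - 24*M*rP + 20*Q^2 = 0 := by
        linear_combination 10*quadP - 2*rP*h23
      rw [hz]
      simp
  set s := Real.sqrt (9*M^2 - 8*Q^2) with hsdef
  have hs2 : s^2 = 9*M^2 - 8*Q^2 := Real.sq_sqrt hD.le
  have hs0 : 0 < s := Real.sqrt_pos.2 hD
  set r₁ := (3*M - s)/2 with hr₁def
  set r₂ := (3*M + s)/2 with hr₂def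
  have hr12 : r₁ < r₂ := by rw [hr₁def, hr₂def]; linarith
  have hr₂0 : 0 < r₂ := by rw [hr₂def]; linarith
  have hQ2 : 2*Q^2 = (9*M^2 - s^2)/4 := by linarith
  have hfac : ∀ r : ℝ, r^2 - 3*M*r + 2*Q^2 = (r - r₁) * (r - r₂) := by
    intro r; rw [hr₁def, hr₂def]; linear_combination hQ2
  have key : ∀ r, 0 < r → mu Λ M Q r = 0 → deriv (mu Λ M Q) r ≠ 0 →
      (r - r₁)*(r - r₂) ≠ 0 := by
    intro r h0 hroot hd hz
    apply hd
    rw [deriv_mu_at_root h0 ((mu_zero_iff h0.ne').1 hroot), hfac r, hz]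
    simp
  have hrmq := key rm hrm0 hmrm hdm
  have hrpq := key rp hrp0 hmrp hdp
  have hgrm : g M Q rm = Λ := (mu_zero_iff hrm0.ne').1 hmrm
  have hgrp : g M Q rp = Λ := (mu_zero_iff hrp0.ne').1 hmrp
  have hcrit : ∀ r : ℝ, r ≠ 0 → deriv (psi Λ M Q) r = -2*((r - r₁)*(r - r₂))/r^5 := by
    intro r hr; rw [deriv_psi hr, hfac r]
  have hrP12 : rP = r₁ ∨ rP = r₂ := by
    have hz : (rP - r₁)*(rP - r₂) = 0 := by rw [← hfac rP]; exact quadP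
    rcases mul_eq_zero.1 hz with hz | hz
    · left; linarith [sub_eq_zero.1 hz]
    · right; linarith [sub_eq_zero.1 hz]
  have hrPr2 : rP = r₂ := by
    rcases hrP12 with h1 | h2
    · exfalso
      have hr₁rm : rm < r₁ := h1 ▸ hrPmem.1
      have hr₁rp : r₁ < rp := h1 ▸ hrPmem.2
      have hr2rp : rp < r₂ := by
        rcases lt_trichotomy r₂ rp with hh | hh | hh
        · exfalso
          have hmem : r₂ ∈ Set.Ioo rm rp := ⟨lt_trans hr₁rm hr12, hh⟩
          have h2eq := huniq r₂ hmem (by rw [hcrit r₂ hr₂0.ne']; simp)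
          rw [h1] at h2eq
          exact absurd h2eq (ne_of_gt hr12)
        · exfalso
          apply hrpq
          have : rp - r₂ = 0 := by rw [hh]; ring
          rw [this, mul_zero]
        · exact hh
      have hgr2 : Λ < g M Q r₂ := by
        have hmono2 : StrictMonoOn (g M Q) (Set.Icc rp r₂) := by
          refine g_mono hrp0 (fun r ha hb => ?_)
          rw [hfac r]
          exact mul_neg_of_pos_of_neg (by linarith) (by linarith)
        have := hmono2 ⟨le_refl rp, hr2rp.le⟩ ⟨hr2rp.le, le_refl r₂⟩ hr2rp
        rwa [hgrp] at this
      obtain ⟨R, hRgt, hgR⟩ := exists_big Λ M Q r₂ hΛ hM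
      obtain ⟨r', hr'Ioo, hgr'⟩ := intermediate_value_Ioo' (le_of_lt hRgt)
        (g_contOn fun x hx => (lt_of_lt_of_le hr₂0 hx.1).ne') (Set.mem_Ioo.2 ⟨hgR, hgr2⟩)
      exact hnr r' (Or.inr (lt_trans hr2rp hr'Ioo.1))
        ((mu_zero_iff (lt_trans hr₂0 hr'Ioo.1).ne').2 hgr')
    · exact h2
  have hrm2 : rm < r₂ := hrPr2 ▸ hrPmem.1
  have hr2rp : r₂ < rp := hrPr2 ▸ hrPmem.2
  have hr1rm : r₁ < rm := by
    rcases le_or_gt r₁ 0 with hle | hgt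
    · linarith
    · rcases lt_trichotomy r₁ rm with hh | hh | hh
      · exact hh
      · exfalso
        apply hrmq
        have : rm - r₁ = 0 := by rw [hh]; ring
        rw [this, zero_mul]
      · exfalso
        have hmem : r₁ ∈ Set.Ioo rm rp := ⟨hh, lt_trans hr12 hr2rp⟩
        have h1eq := huniq r₁ hmem (by rw [hcrit r₁ hgt.ne']; simp)
        rw [hrPr2] at h1eq
        exact absurd h1eq (ne_of_lt hr12)
  have hΛ2 : Λ < g M Q r₂ := by
    have hmono : StrictMonoOn (g M Q) (Set.Icc rm r₂) := by
      refine g_mono hrm0 (fun r ha hb => ?_)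
      rw [hfac r]
      exact mul_neg_of_pos_of_neg (by linarith) (by linarith)
    have := hmono ⟨le_refl rm, hrm2.le⟩ ⟨hrm2.le, le_refl r₂⟩ hrm2
    rwa [hgrm] at this
  refine ⟨s, hs0, hs2, hΛ2, ?_⟩
  intro h10
  have hmono : StrictMonoOn (g M Q) (Set.Icc r₁ rm) := by
    refine g_mono h10 (fun r ha hb => ?_)
    rw [hfac r]
    exact mul_neg_of_pos_of_neg (by linarith) (by linarith)
  have := hmono ⟨le_refl r₁, hr1rm.le⟩ ⟨hr1rm.le, le_refl rm⟩ hr1rm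
  rwa [hgrm] at this

end RNdSAux

open RNdSAux in
/-- Characterization of the non-degenerate Reissner–Nordström–de Sitter parameter range. -/
theorem rnds_nondeg_iff (Λ M Q : ℝ) (hΛ : 0 < Λ) (hM : 0 < M) :
    RNdSNondeg Λ M Q ↔
      (Q = 0 ∧ 0 < 9 * Λ * M ^ 2 ∧ 9 * Λ * M ^ 2 < 1) ∨
      (Q ≠ 0 ∧ 0 < 9 * M ^ 2 - 8 * Q ^ 2 ∧
        max 0 (6 * (M - Real.sqrt (9 * M ^ 2 - 8 * Q ^ 2)) /
            (3 * M - Real.sqrt (9 * M ^ 2 - 8 * Q ^ 2)) ^ 3) < Λ ∧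
        Λ < 6 * (M + Real.sqrt (9 * M ^ 2 - 8 * Q ^ 2)) /
            (3 * M + Real.sqrt (9 * M ^ 2 - 8 * Q ^ 2)) ^ 3) := by
  constructor
  · intro h
    obtain ⟨s, hs0, hs2, hupper, hlower⟩ := forward hΛ hM h
    have hD : 0 < 9*M^2 - 8*Q^2 := by nlinarith
    have hseq : Real.sqrt (9*M^2 - 8*Q^2) = s := by
      rw [show 9*M^2 - 8*Q^2 = s^2 from hs2.symm]
      exact Real.sqrt_sq hs0.le
    by_cases hQ : Q = 0
    · left
      refine ⟨hQ, by positivity, ?_⟩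
      have hs3 : s = 3*M := by nlinarith [hQ, sq_nonneg Q]
      have hgval : g M Q ((3*M + s)/2) = 1/(9*M^2) := by
        rw [hs3, hQ]
        unfold g
        have : (3*M + 3*M)/2 = 3*M := by ring
        rw [this]
        field_simp
        ring
      rw [hgval] at hupper
      have h9 : (0:ℝ) < 9*M^2 := by positivity
      calc 9*Λ*M^2 < 9*(1/(9*M^2))*M^2 := by nlinarith
        _ = 1 := by field_simp
    · right
      have hQ2 : 0 < Q^2 := by positivity
      have hs3 : s < 3*M := by nlinarith
      refine ⟨hQ, by norm_num; linarith, ?_, ?_⟩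
      · rw [show 9*M^2 - 8*Q^2 = 9 * M ^ 2 - 8 * Q ^ 2 from by ring] at hseq
        rw [hseq]
        apply max_lt hΛ
        have hr10 : 0 < (3*M - s)/2 := by linarith
        have hge := hlower hr10
        rw [g_r1 hs2 hs3] at hge
        calc 6 * (M - s) / (3 * M - s) ^ 3 = 6*(M - s)/(3*M - s)^3 := by ring_nf
          _ < Λ := hge
      · rw [show 9*M^2 - 8*Q^2 = 9 * M ^ 2 - 8 * Q ^ 2 from by ring] at hseq
        rw [hseq]
        rw [g_r2 hs2 (by linarith)] at hupper
        calc Λ < 6*(M + s)/(3*M + s)^3 := hupper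
          _ = 6 * (M + s) / (3 * M + s) ^ 3 := by ring_nf
  · rintro (⟨hQ, h1, h2⟩ | ⟨hQ, hD, hlow, hup⟩)
    · subst hQ
      refine exists_nondeg (Λ := Λ) (M := M) (Q := 0) (s := 3*M) (a := M) hΛ hM
        (by linarith) (by ring) hM (by linarith) (by linarith) ?_ ?_
      · have hgval : g M 0 M = -3/M^2 := by
          unfold g
          field_simp
          ring
        rw [hgval]
        have : (-3:ℝ)/M^2 < 0 := div_neg_of_neg_of_pos (by norm_num) (by positivity)
        linarith
      · have hgval : g M 0 ((3*M + 3*M)/2) = 1/(9*M^2) := by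
          unfold g
          have : (3*M + 3*M)/2 = 3*M := by ring
          rw [this]
          field_simp
          ring
        rw [hgval]
        rw [lt_div_iff₀ (by positivity : (0:ℝ) < 9*M^2)]
        linarith
    · set s := Real.sqrt (9 * M ^ 2 - 8 * Q ^ 2) with hsdef
      have hs2 : s^2 = 9*M^2 - 8*Q^2 := by
        rw [hsdef]
        rw [Real.sq_sqrt (by linarith)]
      have hs0 : 0 < s := Real.sqrt_pos.2 (by linarith)
      have hQ2 : 0 < Q^2 := by positivity
      have hs3 : s < 3*M := by nlinarith
      refine exists_nondeg (s := s) (a := (3*M - s)/2) hΛ hM hs0 hs2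
        (by linarith) (le_refl _) (by linarith) ?_ ?_
      · rw [g_r1 hs2 hs3]
        have := lt_of_le_of_lt (le_max_right 0 _) hlow
        calc 6*(M - s)/(3*M - s)^3 = 6 * (M - s) / (3 * M - s) ^ 3 := by ring_nf
          _ < Λ := this
      · rw [g_r2 hs2 (by linarith)]
        calc Λ < 6 * (M + s) / (3 * M + s) ^ 3 := hup
          _ = 6*(M + s)/(3*M + s)^3 := by ring_nf
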